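/- If Z is a τ-bisimulation on a Kripke model M and (w,v) ∈ Z, then for every formula φ of L_○, M,w ⊨_τ φ iff M,v ⊨_τ φ. Consequently, τ-bisimilar pointed models satisfy the same L_○ formulas under τ-bundled semantics. -/

import Mathlib

/-- Bundle terms over index set `A` with arity function `ρ`. -/
inductive BTerm (A : Type) (ρ : A → ℕ) : Type where
  | pos : BTerm A ρ
  | neg : BTerm A ρ
  | nabla (a : A) (ts : Fin (ρ a) → BTerm A ρ) : BTerm A ρ
  | delta (a : A) (ts : Fin (ρ a) → BTerm A ρ) : BTerm A ρ

variable {A : Type} {ρ : A → ℕ} {W : Type}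

/-- Term satisfaction `M,w,Z ⊨ τ` in the Kripke model given by relations `R`. -/
def TSat (R : ∀ a : A, W → Set (Fin (ρ a) → W)) (w : W) (Z : Set W) : BTerm A ρ → Prop
  | .pos => w ∈ Z
  | .neg => w ∉ Z
  | .nabla a ts => ∀ v ∈ R a w, ∃ i : Fin (ρ a), TSat R (v i) Z (ts i)
  | .delta a ts => ∃ v ∈ R a w, ∀ i : Fin (ρ a), TSat R (v i) Z (ts i)

/-- The generated neighborhood `Nbh_M(w, τ)`. -/
def Nbh (R : ∀ a : A, W → Set (Fin (ρ a) → W)) : W → BTerm A ρ → Set (Set W × Set W)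
  | w, .pos => {({w}, ∅)}
  | w, .neg => {(∅, {w})}
  | w, .nabla a ts =>
      { p | ∃ f : {v // v ∈ R a w} → Set W × Set W,
          (∀ v : {v // v ∈ R a w}, ∃ i : Fin (ρ a), f v ∈ Nbh R (v.1 i) (ts i)) ∧
          p = (⋃ v, (f v).1, ⋃ v, (f v).2) }
  | w, .delta a ts =>
      { p | ∃ v ∈ R a w, ∃ g : Fin (ρ a) → Set W × Set W,
          (∀ i : Fin (ρ a), g i ∈ Nbh R (v i) (ts i)) ∧
          p = (⋃ i, (g i).1, ⋃ i, (g i).2) }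

/-- The domain `Dom_M(w, τ)`. -/
def Dom (R : ∀ a : A, W → Set (Fin (ρ a) → W)) : W → BTerm A ρ → Set W
  | w, .pos => {w}
  | w, .neg => {w}
  | w, .nabla a ts => ⋃ v ∈ R a w, ⋃ i : Fin (ρ a), Dom R (v i) (ts i)
  | w, .delta a ts => ⋃ v ∈ R a w, ⋃ i : Fin (ρ a), Dom R (v i) (ts i)

/-- The completion `Nbh^com_M(w, τ)`. -/
def NbhCom (R : ∀ a : A, W → Set (Fin (ρ a) → W)) (w : W) (τ : BTerm A ρ) : Set (Set W) :=
  { Z | Z ⊆ Dom R w τ ∧ ∃ p ∈ Nbh R w τ, p.1 ⊆ Z ∧ p.2 ⊆ Dom R w τ \ Z }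
/-- Formulas of the unimodal language `L_○`. -/
inductive Form (P : Type) : Type where
  | atom : P → Form P
  | top : Form P
  | not : Form P → Form P
  | and : Form P → Form P → Form P
  | circ : Form P → Form P

namespace Form
variable {P : Type}
/-- `φ ∨ ψ`. -/
def or (φ ψ : Form P) : Form P := .not (.and (.not φ) (.not ψ))
/-- `φ → ψ`. -/
def imp (φ ψ : Form P) : Form P := .not (.and φ (.not ψ))
/-- `φ ↔ ψ`. -/
def iff (φ ψ : Form P) : Form P := .and (imp φ ψ) (imp ψ φ)
/-- `●φ := ○¬φ`. -/
def bcirc (φ : Form P) : Form P := .circ (.not φ)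
end Form

variable {A : Type} {ρ : A → ℕ} {W P : Type}

/-- τ-bundled semantics `M,w ⊨_τ φ`. -/
def BSat (R : ∀ a : A, W → Set (Fin (ρ a) → W)) (V : P → Set W) (τ : BTerm A ρ) :
    W → Form P → Prop
  | w, .atom p => w ∈ V p
  | _, .top => True
  | w, .not φ => ¬ BSat R V τ w φ
  | w, .and φ ψ => BSat R V τ w φ ∧ BSat R V τ w ψ
  | w, .circ φ => TSat R w { v | BSat R V τ v φ } τ
/-- The image `Z[X]` of a set under a relation. -/
def relImage (Z : W → W → Prop) (X : Set W) : Set W := { v | ∃ x ∈ X, Z x v }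

/-- `X` and `Y` are `Z`-coherent (relative to the domains of `w` and `v`). -/
def ZCoherent (R : ∀ a : A, W → Set (Fin (ρ a) → W)) (τ : BTerm A ρ)
    (Z : W → W → Prop) (w v : W) (X Y : Set W) : Prop :=
  relImage Z (X ∪ Y) ∩ Dom R w τ ⊆ X ∧ relImage Z (X ∪ Y) ∩ Dom R v τ ⊆ Y

/-- `Z` is a `τ`-bisimulation on the Kripke model `(W, R, V)`. -/
def IsBisim (R : ∀ a : A, W → Set (Fin (ρ a) → W)) (V : P → Set W) (τ : BTerm A ρ)
    (Z : W → W → Prop) : Prop :=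
  ∀ w v, Z w v →
    (∀ p : P, w ∈ V p ↔ v ∈ V p) ∧
    (∀ X Y : Set W, X ⊆ Dom R w τ → Y ⊆ Dom R v τ → ZCoherent R τ Z w v X Y →
      (X ∈ NbhCom R w τ ↔ Y ∈ NbhCom R v τ))

variable {W' : Type}

/-- Relations of the disjoint union of two Kripke models. -/
def sumR (R : ∀ a : A, W → Set (Fin (ρ a) → W)) (R' : ∀ a : A, W' → Set (Fin (ρ a) → W'))
    (a : A) : W ⊕ W' → Set (Fin (ρ a) → W ⊕ W')
  | .inl w => { f | ∃ g ∈ R a w, f = Sum.inl ∘ g }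
  | .inr w => { f | ∃ g ∈ R' a w, f = Sum.inr ∘ g }

/-- Valuation of the disjoint union of two Kripke models. -/
def sumV (V : P → Set W) (V' : P → Set W') (p : P) : Set (W ⊕ W') :=
  Sum.inl '' V p ∪ Sum.inr '' V' p

/-- `M,w` and `N,v` are `τ`-bisimilar: there is a `τ`-bisimulation on the
disjoint union linking the two points. -/
def Bisimilar (R : ∀ a : A, W → Set (Fin (ρ a) → W)) (V : P → Set W)
    (R' : ∀ a : A, W' → Set (Fin (ρ a) → W')) (V' : P → Set W')
    (τ : BTerm A ρ) (w : W) (v : W') : Prop :=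
  ∃ Z : (W ⊕ W') → (W ⊕ W') → Prop,
    IsBisim (sumR R R') (sumV V V') τ Z ∧ Z (.inl w) (.inr v)

lemma nbh_subset_dom (R : ∀ a : A, W → Set (Fin (ρ a) → W)) :
    ∀ (τ : BTerm A ρ) (w : W) (p : Set W × Set W), p ∈ Nbh R w τ →
      p.1 ⊆ Dom R w τ ∧ p.2 ⊆ Dom R w τ := by
  intro τ
  induction τ with
  | pos =>
    intro w p hp
    simp only [Nbh, Set.mem_singleton_iff] at hp
    subst hp; simp [Dom]
  | neg =>
    intro w p hp
    simp only [Nbh, Set.mem_singleton_iff] at hp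
    subst hp; simp [Dom]
  | nabla a ts ih =>
    rintro w p ⟨f, hf, rfl⟩
    constructor
    · intro x hx
      obtain ⟨v, hv⟩ := Set.mem_iUnion.1 hx
      obtain ⟨i, hi⟩ := hf v
      have hx' := (ih i (v.1 i) (f v) hi).1 hv
      simp only [Dom, Set.mem_iUnion]
      exact ⟨v.1, v.2, i, hx'⟩
    · intro x hx
      obtain ⟨v, hv⟩ := Set.mem_iUnion.1 hx
      obtain ⟨i, hi⟩ := hf v
      have hx' := (ih i (v.1 i) (f v) hi).2 hv
      simp only [Dom, Set.mem_iUnion]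
      exact ⟨v.1, v.2, i, hx'⟩
  | delta a ts ih =>
    rintro w p ⟨v, hv, g, hg, rfl⟩
    constructor
    · intro x hx
      obtain ⟨i, hi⟩ := Set.mem_iUnion.1 hx
      have hx' := (ih i (v i) (g i) (hg i)).1 hi
      simp only [Dom, Set.mem_iUnion]
      exact ⟨v, hv, i, hx'⟩
    · intro x hx
      obtain ⟨i, hi⟩ := Set.mem_iUnion.1 hx
      have hx' := (ih i (v i) (g i) (hg i)).2 hi
      simp only [Dom, Set.mem_iUnion]
      exact ⟨v, hv, i, hx'⟩

lemma tsat_iff_nbh (R : ∀ a : A, W → Set (Fin (ρ a) → W)) :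
    ∀ (τ : BTerm A ρ) (w : W) (Zs : Set W),
      TSat R w Zs τ ↔ ∃ p ∈ Nbh R w τ, p.1 ⊆ Zs ∧ ∀ x ∈ p.2, x ∉ Zs := by
  intro τ
  induction τ with
  | pos =>
    intro w Zs
    constructor
    · intro h
      exact ⟨({w}, ∅), rfl, by simpa [TSat] using h, by simp⟩
    · rintro ⟨p, hp, h1, h2⟩
      simp only [Nbh, Set.mem_singleton_iff] at hp
      subst hp
      exact h1 rfl
  | neg =>
    intro w Zs
    constructor
    · intro h
      exact ⟨(∅, {w}), rfl, by simp, by simpa [TSat] using h⟩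
    · rintro ⟨p, hp, h1, h2⟩
      simp only [Nbh, Set.mem_singleton_iff] at hp
      subst hp
      exact h2 w rfl
  | nabla a ts ih =>
    intro w Zs
    constructor
    · intro h
      choose i hi using fun (v : {v // v ∈ R a w}) => h v.1 v.2
      choose p hp h1 h2 using fun v => (ih (i v) (v.1 (i v)) Zs).1 (hi v)
      refine ⟨(⋃ v, (p v).1, ⋃ v, (p v).2), ⟨p, fun v => ⟨i v, hp v⟩, rfl⟩, ?_, ?_⟩
      · exact Set.iUnion_subset h1
      · intro x hx
        obtain ⟨v, hv⟩ := Set.mem_iUnion.1 hx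
        exact h2 v x hv
    · rintro ⟨q, ⟨f, hf, rfl⟩, h1, h2⟩ v hv
      obtain ⟨i, hi⟩ := hf ⟨v, hv⟩
      refine ⟨i, (ih i (v i) Zs).2 ⟨f ⟨v, hv⟩, hi, ?_, ?_⟩⟩
      · exact fun x hx => h1 (Set.mem_iUnion.2 ⟨⟨v, hv⟩, hx⟩)
      · exact fun x hx => h2 x (Set.mem_iUnion.2 ⟨⟨v, hv⟩, hx⟩)
  | delta a ts ih =>
    intro w Zs
    constructor
    · rintro ⟨v, hv, h⟩
      choose p hp h1 h2 using fun i => (ih i (v i) Zs).1 (h i)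
      refine ⟨(⋃ i, (p i).1, ⋃ i, (p i).2), ⟨v, hv, p, hp, rfl⟩, ?_, ?_⟩
      · exact Set.iUnion_subset h1
      · intro x hx
        obtain ⟨i, hi⟩ := Set.mem_iUnion.1 hx
        exact h2 i x hi
    · rintro ⟨q, ⟨v, hv, g, hg, rfl⟩, h1, h2⟩
      refine ⟨v, hv, fun i => (ih i (v i) Zs).2 ⟨g i, hg i, ?_, ?_⟩⟩
      · exact fun x hx => h1 (Set.mem_iUnion.2 ⟨i, hx⟩)
      · exact fun x hx => h2 x (Set.mem_iUnion.2 ⟨i, hx⟩)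

lemma tsat_iff_nbhCom (R : ∀ a : A, W → Set (Fin (ρ a) → W))
    (τ : BTerm A ρ) (w : W) (Zs : Set W) :
    TSat R w Zs τ ↔ (Zs ∩ Dom R w τ) ∈ NbhCom R w τ := by
  rw [tsat_iff_nbh]
  simp only [NbhCom, Set.mem_setOf_eq]
  constructor
  · rintro ⟨p, hp, h1, h2⟩
    obtain ⟨d1, d2⟩ := nbh_subset_dom R τ w p hp
    refine ⟨Set.inter_subset_right, p, hp, fun x hx => ⟨h1 hx, d1 hx⟩, ?_⟩
    exact fun x hx => ⟨d2 hx, fun hx' => h2 x hx hx'.1⟩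
  · rintro ⟨hsub, p, hp, h1, h2⟩
    exact ⟨p, hp, fun x hx => (h1 hx).1, fun x hx hxz => (h2 hx).2 ⟨hxz, (h2 hx).1⟩⟩

lemma bsat_bisim (R : ∀ a : A, W → Set (Fin (ρ a) → W)) (V : P → Set W)
    (τ : BTerm A ρ) (Z : W → W → Prop) (hZ : IsBisim R V τ Z) :
    ∀ (φ : Form P) (w v : W), Z w v → (BSat R V τ w φ ↔ BSat R V τ v φ) := by
  intro φ
  induction φ with
  | atom p => intro w v h; exact (hZ w v h).1 p
  | top => intro w v h; exact Iff.rfl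
  | not φ ih => intro w v h; exact not_congr (ih w v h)
  | and φ ψ ih1 ih2 => intro w v h; exact and_congr (ih1 w v h) (ih2 w v h)
  | circ φ ih =>
    intro w v h
    show TSat R w { u | BSat R V τ u φ } τ ↔ TSat R v { u | BSat R V τ u φ } τ
    rw [tsat_iff_nbhCom, tsat_iff_nbhCom]
    set S : Set W := { u | BSat R V τ u φ } with hS
    have hcoh : ZCoherent R τ Z w v (S ∩ Dom R w τ) (S ∩ Dom R v τ) := by
      constructor
      · rintro u ⟨⟨x, hx, hzx⟩, hu⟩
        have hxS : x ∈ S := hx.elim (fun h => h.1) (fun h => h.1)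
        exact ⟨(ih x u hzx).1 hxS, hu⟩
      · rintro u ⟨⟨x, hx, hzx⟩, hu⟩
        have hxS : x ∈ S := hx.elim (fun h => h.1) (fun h => h.1)
        exact ⟨(ih x u hzx).1 hxS, hu⟩
    exact (hZ w v h).2 _ _ Set.inter_subset_right Set.inter_subset_right hcoh

lemma tsat_sum_inl (R : ∀ a : A, W → Set (Fin (ρ a) → W))
    (R' : ∀ a : A, W' → Set (Fin (ρ a) → W')) :
    ∀ (τ : BTerm A ρ) (w : W) (S : Set (W ⊕ W')),
      TSat (sumR R R') (Sum.inl w) S τ ↔ TSat R w (Sum.inl ⁻¹' S) τ := by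
  intro τ
  induction τ with
  | pos => intro w S; exact Iff.rfl
  | neg => intro w S; exact Iff.rfl
  | nabla a ts ih =>
    intro w S
    constructor
    · intro h g hg
      obtain ⟨i, hi⟩ := h (Sum.inl ∘ g) ⟨g, hg, rfl⟩
      exact ⟨i, (ih i (g i) S).1 hi⟩
    · rintro h f ⟨g, hg, rfl⟩
      obtain ⟨i, hi⟩ := h g hg
      exact ⟨i, (ih i (g i) S).2 hi⟩
  | delta a ts ih =>
    intro w S
    constructor
    · rintro ⟨f, ⟨g, hg, rfl⟩, h⟩
      exact ⟨g, hg, fun i => (ih i (g i) S).1 (h i)⟩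
    · rintro ⟨g, hg, h⟩
      exact ⟨Sum.inl ∘ g, ⟨g, hg, rfl⟩, fun i => (ih i (g i) S).2 (h i)⟩

lemma tsat_sum_inr (R : ∀ a : A, W → Set (Fin (ρ a) → W))
    (R' : ∀ a : A, W' → Set (Fin (ρ a) → W')) :
    ∀ (τ : BTerm A ρ) (w : W') (S : Set (W ⊕ W')),
      TSat (sumR R R') (Sum.inr w) S τ ↔ TSat R' w (Sum.inr ⁻¹' S) τ := by
  intro τ
  induction τ with
  | pos => intro w S; exact Iff.rfl
  | neg => intro w S; exact Iff.rfl
  | nabla a ts ih =>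
    intro w S
    constructor
    · intro h g hg
      obtain ⟨i, hi⟩ := h (Sum.inr ∘ g) ⟨g, hg, rfl⟩
      exact ⟨i, (ih i (g i) S).1 hi⟩
    · rintro h f ⟨g, hg, rfl⟩
      obtain ⟨i, hi⟩ := h g hg
      exact ⟨i, (ih i (g i) S).2 hi⟩
  | delta a ts ih =>
    intro w S
    constructor
    · rintro ⟨f, ⟨g, hg, rfl⟩, h⟩
      exact ⟨g, hg, fun i => (ih i (g i) S).1 (h i)⟩
    · rintro ⟨g, hg, h⟩
      exact ⟨Sum.inr ∘ g, ⟨g, hg, rfl⟩, fun i => (ih i (g i) S).2 (h i)⟩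

lemma bsat_sum_inl (R : ∀ a : A, W → Set (Fin (ρ a) → W)) (V : P → Set W)
    (R' : ∀ a : A, W' → Set (Fin (ρ a) → W')) (V' : P → Set W') (τ : BTerm A ρ) :
    ∀ (φ : Form P) (w : W),
      BSat (sumR R R') (sumV V V') τ (Sum.inl w) φ ↔ BSat R V τ w φ := by
  intro φ
  induction φ with
  | atom p =>
    intro w
    show Sum.inl w ∈ sumV V V' p ↔ w ∈ V p
    simp [sumV]
  | top => intro w; exact Iff.rfl
  | not φ ih => intro w; exact not_congr (ih w)
  | and φ ψ ih1 ih2 => intro w; exact and_congr (ih1 w) (ih2 w)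
  | circ φ ih =>
    intro w
    show TSat (sumR R R') (Sum.inl w) { u | BSat (sumR R R') (sumV V V') τ u φ } τ ↔
      TSat R w { u | BSat R V τ u φ } τ
    rw [tsat_sum_inl]
    have hset : Sum.inl ⁻¹' { u : W ⊕ W' | BSat (sumR R R') (sumV V V') τ u φ }
        = { u : W | BSat R V τ u φ } := by
      ext u; exact ih u
    rw [hset]

lemma bsat_sum_inr (R : ∀ a : A, W → Set (Fin (ρ a) → W)) (V : P → Set W)
    (R' : ∀ a : A, W' → Set (Fin (ρ a) → W')) (V' : P → Set W') (τ : BTerm A ρ) :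
    ∀ (φ : Form P) (w : W'),
      BSat (sumR R R') (sumV V V') τ (Sum.inr w) φ ↔ BSat R' V' τ w φ := by
  intro φ
  induction φ with
  | atom p =>
    intro w
    show Sum.inr w ∈ sumV V V' p ↔ w ∈ V' p
    simp [sumV]
  | top => intro w; exact Iff.rfl
  | not φ ih => intro w; exact not_congr (ih w)
  | and φ ψ ih1 ih2 => intro w; exact and_congr (ih1 w) (ih2 w)
  | circ φ ih =>
    intro w
    show TSat (sumR R R') (Sum.inr w) { u | BSat (sumR R R') (sumV V V') τ u φ } τ ↔
      TSat R' w { u | BSat R' V' τ u φ } τ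
    rw [tsat_sum_inr]
    have hset : Sum.inr ⁻¹' { u : W ⊕ W' | BSat (sumR R R') (sumV V V') τ u φ }
        = { u : W' | BSat R' V' τ u φ } := by
      ext u; exact ih u
    rw [hset]

/-- truth under `τ`-bundled semantics is invariant under
`τ`-bisimulations; consequently `τ`-bisimilar pointed models satisfy the same
formulas. -/
theorem bisim_invariance (R : ∀ a : A, W → Set (Fin (ρ a) → W)) (V : P → Set W)
    (τ : BTerm A ρ) :
    (∀ Z : W → W → Prop, IsBisim R V τ Z →
      ∀ w v, Z w v → ∀ φ : Form P, BSat R V τ w φ ↔ BSat R V τ v φ) ∧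
    (∀ (W' : Type) (R' : ∀ a : A, W' → Set (Fin (ρ a) → W')) (V' : P → Set W')
      (w : W) (v : W'), Bisimilar R V R' V' τ w v →
        ∀ φ : Form P, BSat R V τ w φ ↔ BSat R' V' τ v φ) := by
  constructor
  · intro Z hZ w v h φ
    exact bsat_bisim R V τ Z hZ φ w v h
  · rintro W' R' V' w v ⟨Z, hZ, hwv⟩ φ
    rw [← bsat_sum_inl R V R' V' τ φ w, ← bsat_sum_inr R V R' V' τ φ v]
    exact bsat_bisim _ _ τ Z hZ φ _ _ hwv
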